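/- If the greedily constructed branch β (going left at v whenever some good branch passes through the left child of v) turns left only finitely often, and t has a good branch, then one derives a contradiction: any good branch σ passing through the last left-turn point of β must diverge from β at some node w where β goes right but a good branch passes through the left child of w. -/

import Mathlib

open Classical

/-- Infinite binary trees over {a,b}; `true` = a, `false` = b. -/
abbrev Tree2 := List (Fin 2) → Bool

/-- The length-`n` prefix of a branch. -/
def pre (β : ℕ → Fin 2) (n : ℕ) : List (Fin 2) := List.ofFn (fun i : Fin n => β i)

/-- A branch is good: all its finite prefixes are labelled `a` and it turns left (0)
infinitely often. -/
def Good (t : Tree2) (β : ℕ → Fin 2) : Prop :=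
  (∀ n, t (pre β n) = true) ∧ (∀ m, ∃ n ≥ m, β n = 0)

/-- `β` is strictly to the left of `γ`. -/
def LeftOf (β γ : ℕ → Fin 2) : Prop :=
  ∃ n, (∀ i < n, β i = γ i) ∧ β n = 0 ∧ γ n = 1

/-- A branch passes through a node. -/
def Through (γ : ℕ → Fin 2) (v : List (Fin 2)) : Prop := pre γ v.length = v
/-- The greedy prefix: descend left iff some good branch passes through the left child. -/
noncomputable def greedyPre (t : Tree2) : ℕ → List (Fin 2)
  | 0 => []
  | n + 1 => greedyPre t n ++
      [if ∃ γ, Good t γ ∧ Through γ (greedyPre t n ++ [(0 : Fin 2)]) then (0 : Fin 2) else 1]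

/-- The greedily constructed branch. -/
noncomputable def greedy (t : Tree2) (n : ℕ) : Fin 2 :=
  if ∃ γ, Good t γ ∧ Through γ (greedyPre t n ++ [(0 : Fin 2)]) then 0 else 1

lemma pre_succ (β : ℕ → Fin 2) (n : ℕ) : pre β (n+1) = pre β n ++ [β n] := by
  rw [pre, List.ofFn_succ']
  simp [pre, List.concat_eq_append, Fin.coe_castSucc]

lemma pre_length (β : ℕ → Fin 2) (n : ℕ) : (pre β n).length = n := by simp [pre]

lemma fin2 (x : Fin 2) : x = 0 ∨ x = 1 := by omega

lemma pre_congr {β γ : ℕ → Fin 2} {n : ℕ} (h : ∀ i < n, β i = γ i) : pre β n = pre γ n := by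
  unfold pre; congr 1; funext i; exact h i i.isLt

lemma greedyPre_succ (t : Tree2) (n : ℕ) :
    greedyPre t (n+1) = greedyPre t n ++ [greedy t n] := rfl

lemma greedyPre_eq (t : Tree2) (n : ℕ) : greedyPre t n = pre (greedy t) n := by
  induction n with
  | zero => rfl
  | succ n ih => rw [greedyPre_succ, ih, ← pre_succ]

lemma through_pre_iff (γ δ : ℕ → Fin 2) (n : ℕ) :
    Through γ (pre δ n) ↔ pre γ n = pre δ n := by
  unfold Through; rw [pre_length]

lemma through_pre_append (γ δ : ℕ → Fin 2) (n : ℕ) (x : Fin 2) :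
    Through γ (pre δ n ++ [x]) ↔ pre γ (n+1) = pre δ n ++ [x] := by
  unfold Through; simp [pre_length]

/-- If the greedy branch turned left only finitely often while `t` has a good branch,
then any good branch passing through the point after the last left turn diverges from the
greedy branch at a node where the greedy branch goes right although a good branch passes
through the left child; this yields a contradiction. -/
theorem greedy_turns_left_infinitely (t : Tree2) (h : ∃ γ, Good t γ)
    (N : ℕ) (hfin : ∀ n ≥ N, greedy t n = 1) :
    (∀ σ, Good t σ → Through σ (pre (greedy t) N) →
      ∃ w, N ≤ w ∧ (∀ i < w, σ i = greedy t i) ∧ greedy t w = 1 ∧ σ w = 0 ∧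
        ∃ γ, Good t γ ∧ Through γ (pre (greedy t) w ++ [(0 : Fin 2)])) ∧
    False := by
  have key : ∀ σ, Good t σ → Through σ (pre (greedy t) N) →
      ∃ w, N ≤ w ∧ (∀ i < w, σ i = greedy t i) ∧ greedy t w = 1 ∧ σ w = 0 ∧
        ∃ γ, Good t γ ∧ Through γ (pre (greedy t) w ++ [(0 : Fin 2)]) := by
    intro σ hσ hthr
    rw [through_pre_iff] at hthr
    have hex : ∃ n, N ≤ n ∧ σ n = 0 := by
      obtain ⟨n, hn, h0⟩ := hσ.2 N
      exact ⟨n, hn, h0⟩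
    set w := Nat.find hex with hwdef
    obtain ⟨hwN, hw0⟩ := Nat.find_spec hex
    have hthr' : ∀ i < N, σ i = greedy t i := by
      intro i hi
      have := congrArg (fun l => l[i]?) hthr
      simpa [pre, List.getElem?_ofFn, Fin.val_cast_of_lt, hi] using this
    have hagree : ∀ i < w, σ i = greedy t i := by
      intro i hi
      by_cases hiN : i < N
      · exact hthr' i hiN
      · have hNi : N ≤ i := le_of_not_gt hiN
        have hmin : ¬ (N ≤ i ∧ σ i = 0) := Nat.find_min hex hi
        have hσi : σ i = 1 := by
          rcases fin2 (σ i) with h0 | h1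
          · exact absurd ⟨hNi, h0⟩ hmin
          · exact h1
        rw [hσi, hfin i hNi]
    refine ⟨w, hwN, hagree, hfin w hwN, hw0, σ, hσ, ?_⟩
    rw [through_pre_append, pre_succ, pre_congr hagree, hw0]
  refine ⟨key, ?_⟩
  have through_all : ∀ n, ∃ γ, Good t γ ∧ Through γ (pre (greedy t) n) := by
    intro n
    induction n with
    | zero =>
      obtain ⟨γ, hγ⟩ := h
      exact ⟨γ, hγ, by simp [Through, pre]⟩
    | succ n ih =>
      obtain ⟨γ, hγ, hth⟩ := ih
      rw [through_pre_iff] at hth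
      by_cases hc : ∃ δ, Good t δ ∧ Through δ (greedyPre t n ++ [(0 : Fin 2)])
      · have hg : greedy t n = 0 := by unfold greedy; exact if_pos hc
        obtain ⟨δ, hδ, hthδ⟩ := hc
        refine ⟨δ, hδ, ?_⟩
        rw [greedyPre_eq] at hthδ
        rw [through_pre_iff]
        rw [through_pre_append] at hthδ
        rw [hthδ, pre_succ, hg]
      · have hg : greedy t n = 1 := by unfold greedy; exact if_neg hc
        have hγn : γ n = 1 := by
          rcases fin2 (γ n) with h0 | h1
          · exfalso
            apply hc
            refine ⟨γ, hγ, ?_⟩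
            rw [greedyPre_eq, through_pre_append, pre_succ, hth, h0]
          · exact h1
        refine ⟨γ, hγ, ?_⟩
        rw [through_pre_iff, pre_succ, pre_succ, hth, hγn, hg]
  obtain ⟨σ, hσ, hthr⟩ := through_all N
  obtain ⟨w, hwN, _, hg1, _, γ, hγ, hthγ⟩ := key σ hσ hthr
  have hg0 : greedy t w = 0 := by
    unfold greedy
    rw [if_pos ⟨γ, hγ, by rwa [greedyPre_eq]⟩]
  rw [hg1] at hg0
  exact absurd hg0 (by decide)
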